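/- Fix integers n ≥ 1, m ≥ 1, N = n + m, and an injective function r : Fin N → ℝ. For an n-element subset Z ⊆ Fin N, let p(Z) ∈ (Fin (m+1))^n be the nondecreasing rearrangement of the placements { |{ j ∉ Z : r j < r i }| : i ∈ Z }. Then the map Z ↦ p(Z) is a bijection from the n-element subsets of Fin N onto the nondecreasing n-tuples (u_1 ≤ u_2 ≤ … ≤ u_n) with entries in {0, 1, …, m}; consequently, when Z is uniform over n-element subsets, every such nondecreasing tuple of placements occurs with probability exactly 1 / C(N, n). -/

import Mathlib

open Finset

lemma gap_aux {n N : ℕ} (e : Fin n ↪o Fin N) :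
    ∀ (d : ℕ) (a b : Fin n), (a : ℕ) + d = b → (e a : ℕ) + d ≤ e b := by
  intro d
  induction d with
  | zero =>
    intro a b h
    have : a = b := Fin.ext (by omega)
    subst this; simp
  | succ d ih =>
    intro a b h
    have hb' : (a : ℕ) + d < n := by omega
    set b' : Fin n := ⟨(a : ℕ) + d, by omega⟩ with hb'def
    have h1 : (e a : ℕ) + d ≤ e b' := ih a b' rfl
    have h2 : e b' < e b := e.strictMono (by simp [Fin.lt_def, hb'def]; omega)
    have h3 : (e b' : ℕ) < e b := h2
    omega

lemma key_aux {n N : ℕ} (W : Finset (Fin N)) (hW : W.card = n) (k : Fin n) :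
    ((W.orderEmbOfFin hW k : Fin N) : ℕ)
      = (k : ℕ) + ((Wᶜ.filter (· < W.orderEmbOfFin hW k)).card) := by
  set e := W.orderEmbOfFin hW with he
  have h1 : (Finset.univ.filter (· < e k)).card = (e k : ℕ) := by
    rw [show Finset.univ.filter (· < e k) = Finset.Iio (e k) by ext x; simp, Fin.card_Iio]
  have hsplit : (Finset.univ.filter (· < e k))
      = W.filter (· < e k) ∪ Wᶜ.filter (· < e k) := by
    rw [← Finset.filter_union, Finset.union_compl]
  have hdisj : Disjoint (W.filter (· < e k)) (Wᶜ.filter (· < e k)) :=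
    Finset.disjoint_filter_filter disjoint_compl_right
  have hcard : (Finset.univ.filter (· < e k)).card
      = (W.filter (· < e k)).card + (Wᶜ.filter (· < e k)).card := by
    rw [hsplit, Finset.card_union_of_disjoint hdisj]
  have hrange : Set.range ⇑e = ↑W := Finset.range_orderEmbOfFin W hW
  have hWf : W.filter (· < e k) = Finset.map e.toEmbedding (Finset.Iio k) := by
    ext x
    simp only [Finset.mem_filter, Finset.mem_map, Finset.mem_Iio,
      RelEmbedding.coe_toEmbedding]
    constructor
    · rintro ⟨hxW, hlt⟩
      have : x ∈ Set.range ⇑e := by rw [hrange]; exact hxW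
      obtain ⟨j, rfl⟩ := this
      exact ⟨j, e.lt_iff_lt.mp hlt, rfl⟩
    · rintro ⟨j, hj, rfl⟩
      exact ⟨by rw [he]; exact Finset.orderEmbOfFin_mem W hW j, e.lt_iff_lt.mpr hj⟩
  have h2 : (W.filter (· < e k)).card = (k : ℕ) := by
    rw [hWf, Finset.card_map, Fin.card_Iio]
  omega

/-- The map sending a treated subset `Z` to the nondecreasing rearrangement of its
placements is a bijection from the `n`-element subsets of `Fin N` onto the
nondecreasing `n`-tuples with entries in `{0, …, m}`; consequently each such tuple
of ordered placements occurs with probability exactly `1 / C(N, n)` under a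
uniformly random `Z`. -/
theorem placements_sorted_bijection
    (n m N : ℕ) (hn : 1 ≤ n) (hm : 1 ≤ m) (hN : N = n + m)
    (r : Fin N → ℝ) (hr : Function.Injective r)
    (p : Finset (Fin N) → (Fin n → ℕ))
    (hp : ∀ Z : Finset (Fin N), ∀ t : Fin n,
      p Z t = ((Z.val.map (fun i => ((Zᶜ).filter (fun j => r j < r i)).card)).sort
          (· ≤ ·)).getD t.val 0) :
    Set.BijOn p {Z : Finset (Fin N) | Z.card = n}
        {u : Fin n → ℕ | Monotone u ∧ ∀ t : Fin n, u t ≤ m}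
    ∧ ∀ u : Fin n → ℕ, Monotone u → (∀ t : Fin n, u t ≤ m) →
        ((((Finset.univ : Finset (Fin N)).powersetCard n).filter
            (fun Z => p Z = u)).card : ℚ) / (N.choose n : ℚ)
          = 1 / (N.choose n : ℚ) := by
  classical
  set σ := Tuple.sort r with hσ
  have hs : StrictMono (r ∘ ⇑σ) :=
    (Tuple.monotone_sort r).strictMono_of_injective (hr.comp σ.injective)
  set ρ := σ.symm with hρ
  have hlt : ∀ i j : Fin N, r i < r j ↔ ρ i < ρ j := by
    intro i j
    conv_lhs => rw [← Equiv.apply_symm_apply σ i, ← Equiv.apply_symm_apply σ j]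
    exact hs.lt_iff_lt
  -- the image of Z under the rank permutation
  have hcardW : ∀ Z : Finset (Fin N), Z.card = n → (Z.map ρ.toEmbedding).card = n := by
    intro Z hZ; rw [Finset.card_map]; exact hZ
  -- main formula: p Z t = number of controls (in rank picture) below the t-th treated rank
  have hform : ∀ (Z : Finset (Fin N)) (hZ : (Z.map ρ.toEmbedding).card = n) (t : Fin n),
      p Z t = (((Z.map ρ.toEmbedding)ᶜ).filter
          (· < (Z.map ρ.toEmbedding).orderEmbOfFin hZ t)).card := by
    intro Z hZ t
    set W := Z.map ρ.toEmbedding with hW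
    set e := W.orderEmbOfFin hZ with he
    set q : Fin n → ℕ := fun k => (Wᶜ.filter (· < e k)).card with hq
    have hWc : Wᶜ = Zᶜ.map ρ.toEmbedding := by
      ext x
      simp [hW, Finset.mem_map_equiv]
    have hci : ∀ i : Fin N,
        ((Zᶜ).filter (fun j => r j < r i)).card = (Wᶜ.filter (· < ρ i)).card := by
      intro i
      have h1 : (Zᶜ).filter (fun j => r j < r i) = (Zᶜ).filter (fun j => ρ j < ρ i) := by
        apply Finset.filter_congr; intro j _; simp [hlt j i]
      have h2 : Wᶜ.filter (· < ρ i)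
          = Finset.map ρ.toEmbedding ((Zᶜ).filter (fun j => ρ j < ρ i)) := by
        rw [hWc, Finset.map_filter]
        apply Finset.filter_congr
        intro x _
        simp
      rw [h1, h2, Finset.card_map]
    have hrange : Set.range ⇑e = ↑W := Finset.range_orderEmbOfFin W hZ
    have hWuniv : W = Finset.univ.map e.toEmbedding := by
      ext x
      simp only [Finset.mem_map, Finset.mem_univ, true_and, RelEmbedding.coe_toEmbedding]
      constructor
      · intro hx
        have : x ∈ Set.range ⇑e := by rw [hrange]; exact hx
        obtain ⟨j, rfl⟩ := this; exact ⟨j, rfl⟩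
      · rintro ⟨j, rfl⟩
        have : e j ∈ Set.range ⇑e := ⟨j, rfl⟩
        rw [hrange] at this; exact this
    have hM : Z.val.map (fun i => ((Zᶜ).filter (fun j => r j < r i)).card)
        = (↑(List.ofFn q) : Multiset ℕ) := by
      have step1 : Z.val.map (fun i => ((Zᶜ).filter (fun j => r j < r i)).card)
          = Z.val.map (fun i => (Wᶜ.filter (· < ρ i)).card) := by
        apply Multiset.map_congr rfl
        intro i _; exact hci i
      have step2 : Z.val.map (fun i => (Wᶜ.filter (· < ρ i)).card)
          = W.val.map (fun w => (Wᶜ.filter (· < w)).card) := by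
        rw [hW, Finset.map_val, Multiset.map_map]
        rfl
      have hval : W.val = Multiset.map (⇑e) Finset.univ.val := by
        rw [hWuniv, Finset.map_val]; rfl
      have step3 : W.val.map (fun w => (Wᶜ.filter (· < w)).card)
          = Finset.univ.val.map q := by
        rw [hval, Multiset.map_map]; rfl
      have step4 : (Finset.univ.val.map q : Multiset ℕ) = (↑(List.ofFn q) : Multiset ℕ) := by
        rw [Fin.univ_def]
        simp [List.ofFn_eq_map]
      rw [step1, step2, step3, step4]
    have hqmono : Monotone q := by
      intro a b hab
      have hab' : (a : ℕ) ≤ b := hab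
      have hg := gap_aux e ((b : ℕ) - a) a b (by omega)
      have ka := key_aux W hZ a
      have kb := key_aux W hZ b
      rw [← he] at ka kb
      simp only [hq]
      omega
    have hsorted : List.Pairwise (· ≤ ·) (List.ofFn q) := (List.sortedLE_ofFn_iff.mpr hqmono).pairwise
    have hperm : ((Z.val.map (fun i => ((Zᶜ).filter (fun j => r j < r i)).card)).sort
        (· ≤ ·)) = List.ofFn q := by
      apply List.Perm.eq_of_pairwise' (Multiset.pairwise_sort _ _) hsorted
      rw [← Multiset.coe_eq_coe, Multiset.sort_eq, hM]
    rw [hp Z t, hperm]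
    rw [List.getD_eq_getElem _ _ (by rw [List.length_ofFn]; exact t.isLt),
      List.getElem_ofFn]
  -- a consequence: the ranks are recovered from p
  have hkey : ∀ (Z : Finset (Fin N)) (hZ : (Z.map ρ.toEmbedding).card = n) (t : Fin n),
      (((Z.map ρ.toEmbedding).orderEmbOfFin hZ t : Fin N) : ℕ) = (t : ℕ) + p Z t := by
    intro Z hZ t
    rw [hform Z hZ t]
    exact key_aux _ hZ t
  -- maps-to
  have hmaps : Set.MapsTo p {Z : Finset (Fin N) | Z.card = n}
      {u : Fin n → ℕ | Monotone u ∧ ∀ t : Fin n, u t ≤ m} := by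
    intro Z hZ
    have hZ' := hcardW Z hZ
    constructor
    · intro a b hab
      have hab' : (a : ℕ) ≤ b := hab
      have hg := gap_aux ((Z.map ρ.toEmbedding).orderEmbOfFin hZ') ((b : ℕ) - a) a b (by omega)
      have ka := hkey Z hZ' a
      have kb := hkey Z hZ' b
      omega
    · intro t
      rw [hform Z hZ' t]
      calc (((Z.map ρ.toEmbedding)ᶜ).filter _).card
          ≤ ((Z.map ρ.toEmbedding)ᶜ).card := Finset.card_filter_le _ _
        _ = N - n := by rw [Finset.card_compl, hcardW Z hZ, Fintype.card_fin]
        _ = m := by omega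
  -- injectivity on the set
  have hinj : Set.InjOn p {Z : Finset (Fin N) | Z.card = n} := by
    intro Z hZ Z' hZ' hpp
    have h1 := hcardW Z hZ
    have h2 := hcardW Z' hZ'
    have heq : ⇑((Z.map ρ.toEmbedding).orderEmbOfFin h1)
        = ⇑((Z'.map ρ.toEmbedding).orderEmbOfFin h2) := by
      funext t
      apply Fin.ext
      rw [hkey Z h1 t, hkey Z' h2 t, hpp]
    have hWW : (Z.map ρ.toEmbedding) = (Z'.map ρ.toEmbedding) := by
      apply Finset.coe_injective
      rw [← Finset.range_orderEmbOfFin _ h1, ← Finset.range_orderEmbOfFin _ h2, heq]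
    exact Finset.map_injective ρ.toEmbedding hWW
  -- surjectivity onto the set
  have hsurj : Set.SurjOn p {Z : Finset (Fin N) | Z.card = n}
      {u : Fin n → ℕ | Monotone u ∧ ∀ t : Fin n, u t ≤ m} := by
    rintro u ⟨hmono, hbd⟩
    set v : Fin n → Fin N := fun t => ⟨(t : ℕ) + u t, by
      have h1 := t.isLt; have h2 := hbd t; omega⟩ with hv
    have hvmono : StrictMono v := by
      intro a b hab
      have h1 : (a : ℕ) < b := hab
      have h2 : u a ≤ u b := hmono hab.le
      simp only [hv, Fin.mk_lt_mk, Fin.lt_def]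
      omega
    set W₀ : Finset (Fin N) := Finset.univ.map (OrderEmbedding.ofStrictMono v hvmono).toEmbedding
      with hW₀
    set Z : Finset (Fin N) := W₀.map ρ.symm.toEmbedding with hZdef
    have hZcard : Z.card = n := by
      rw [hZdef, Finset.card_map, hW₀, Finset.card_map, Finset.card_univ, Fintype.card_fin]
    have hWZ : Z.map ρ.toEmbedding = W₀ := by
      ext x
      simp [hZdef, Finset.mem_map_equiv]
    refine ⟨Z, hZcard, ?_⟩
    have hZ' := hcardW Z hZcard
    have hveq : v = ⇑((Z.map ρ.toEmbedding).orderEmbOfFin hZ') := by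
      apply Finset.orderEmbOfFin_unique hZ' _ hvmono
      intro x
      rw [hWZ, hW₀]
      simp only [Finset.mem_map, Finset.mem_univ, true_and, RelEmbedding.coe_toEmbedding]
      exact ⟨x, rfl⟩
    funext t
    have hk := hkey Z hZ' t
    rw [← hveq] at hk
    simp only [hv] at hk
    omega
  refine ⟨⟨hmaps, hinj, hsurj⟩, ?_⟩
  intro u hmono hbd
  obtain ⟨Z₀, hZ₀, hpZ₀⟩ := hsurj (Set.mem_setOf.mpr ⟨hmono, hbd⟩)
  have hfil : ((Finset.univ : Finset (Fin N)).powersetCard n).filter (fun Z => p Z = u)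
      = {Z₀} := by
    ext Z
    simp only [Finset.mem_filter, Finset.mem_powersetCard_univ, Finset.mem_singleton]
    constructor
    · rintro ⟨hZc, hZu⟩
      exact hinj (Set.mem_setOf.mpr hZc) hZ₀ (by rw [hZu, hpZ₀])
    · rintro rfl
      exact ⟨hZ₀, hpZ₀⟩
  rw [hfil, Finset.card_singleton]
  norm_num
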